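/- Let D be a converse invariant oriented graph and let u ∈ V(D). Let D' = 2D⁺_u be the digraph obtained by taking two disjoint copies of D and adding a single arc between the two copies of the vertex u (bridge-mirroring D at u). Then D' is converse invariant. -/

import Mathlib

open Finset Polynomial

/-- An oriented graph: loopless, at most one arc between any pair of vertices. -/
def IsOrgraph {V : Type*} (A : V → V → Prop) : Prop :=
  ∀ u v, A u v → u ≠ v ∧ ¬ A v u

/-- A tournament: loopless, exactly one arc between any two distinct vertices. -/
def IsTournament {W : Type*} (B : W → W → Prop) : Prop :=
  (∀ v, ¬ B v v) ∧ ∀ u v, u ≠ v → (B u v ↔ ¬ B v u)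

/-- The number of subdigraphs of `B` isomorphic to `A`: a subdigraph is a pair of a
vertex set and an arc relation contained in `B` with all endpoints in the vertex set. -/
noncomputable def copyCount {V W : Type*} (A : V → V → Prop) (B : W → W → Prop) : ℕ :=
  Nat.card {p : Set W × (W → W → Prop) //
    (∀ a b, p.2 a b → B a b ∧ a ∈ p.1 ∧ b ∈ p.1) ∧
    ∃ e : V ≃ p.1, ∀ a b, A a b ↔ p.2 (e a : W) (e b : W)}

/-- `A` is converse invariant: every finite tournament contains as many copies of `A`
as of its converse. -/
def ConverseInvariant {V : Type*} (A : V → V → Prop) : Prop :=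
  ∀ (W : Type) (_ : Fintype W) (B : W → W → Prop), IsTournament B →
    copyCount A B = copyCount (fun a b => A b a) B

/-- Out-degree. -/
noncomputable def outDeg {V : Type*} (A : V → V → Prop) (u : V) : ℕ :=
  Nat.card {v // A u v}

/-- In-degree. -/
noncomputable def inDeg {V : Type*} (A : V → V → Prop) (u : V) : ℕ :=
  Nat.card {v // A v u}

/-- The polynomial `P_D(x) = ∑_u (1+x)^{d⁺(u)} (1-x)^{d⁻(u)}`. -/
noncomputable def degPoly {V : Type*} [Fintype V] (A : V → V → Prop) : Polynomial ℤ :=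
  ∑ u : V, (1 + X) ^ outDeg A u * (1 - X) ^ inDeg A u

/-- `A` is an orientation of the simple graph `G`. -/
def IsOrientation {V : Type*} (G : SimpleGraph V) (A : V → V → Prop) : Prop :=
  (∀ u v, A u v → ¬ A v u) ∧ ∀ u v, G.Adj u v ↔ (A u v ∨ A v u)

/-- The disjoint union of two copies of a digraph. -/
def disjUnion2 {V : Type*} (A : V → V → Prop) : V ⊕ V → V ⊕ V → Prop :=
  fun x y => match x, y with
  | Sum.inl a, Sum.inl b => A a b
  | Sum.inr a, Sum.inr b => A a b
  | _, _ => False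

/-- Bridge-mirroring `A` at `u`: two disjoint copies of `A` plus one arc
between the two copies of `u`. -/
def bridgeMirror {V : Type*} (A : V → V → Prop) (u : V) : V ⊕ V → V ⊕ V → Prop :=
  fun x y => disjUnion2 A x y ∨ (x = Sum.inl u ∧ y = Sum.inr u)

section ConvAux

variable {V V₁ V₂ W : Type*}

/-- Arc-preserving injections from `A` into `B`. -/
abbrev Emb (A : V → V → Prop) (B : W → W → Prop) : Type _ :=
  {e : V ↪ W // ∀ a b, A a b → B (e a) (e b)}

/-- Automorphisms of `A`. -/
abbrev AutS (A : V → V → Prop) : Type _ :=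
  {σ : V ≃ V // ∀ a b, A a b ↔ A (σ a) (σ b)}

/-- The subtype counted by `copyCount`. -/
abbrev Copies (A : V → V → Prop) (B : W → W → Prop) : Type _ :=
  {p : Set W × (W → W → Prop) //
    (∀ a b, p.2 a b → B a b ∧ a ∈ p.1 ∧ b ∈ p.1) ∧
    ∃ e : V ≃ p.1, ∀ a b, A a b ↔ p.2 (e a : W) (e b : W)}

lemma copyCount_eq_card (A : V → V → Prop) (B : W → W → Prop) :
    copyCount A B = Nat.card (Copies A B) := rfl

lemma card_compl_split {α : Type*} [Finite α] (p : α → Prop) :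
    Nat.card α = Nat.card {x // p x} + Nat.card {x // ¬ p x} := by
  haveI := Fintype.ofFinite α
  classical
  have h := Fintype.card_subtype_le p
  simp only [Nat.card_eq_fintype_card, Fintype.card_subtype_compl]
  omega

lemma card_sigma_congr {ι : Type*} {f g : ι → Type*} [∀ i, Finite (f i)] [∀ i, Finite (g i)]
    (h : ∀ i, Nat.card (f i) = Nat.card (g i)) :
    Nat.card (Σ i, f i) = Nat.card (Σ i, g i) := by
  have he : ∀ i, Nonempty (f i ≃ g i) := fun i => by
    haveI := Fintype.ofFinite (f i); haveI := Fintype.ofFinite (g i)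
    exact ⟨Fintype.equivOfCardEq (by
      have := h i; simpa [Nat.card_eq_fintype_card] using this)⟩
  exact Nat.card_congr (Equiv.sigmaCongrRight fun i => (he i).some)

/-- The copy (subdigraph) determined by an embedding. -/
def toCopy (A : V → V → Prop) (B : W → W → Prop) (e : Emb A B) : Copies A B := by
  refine ⟨(Set.range e.1, fun a b => ∃ x y, A x y ∧ e.1 x = a ∧ e.1 y = b), ?_, ?_⟩
  · rintro a b ⟨x, y, hxy, rfl, rfl⟩
    exact ⟨e.2 x y hxy, ⟨x, rfl⟩, ⟨y, rfl⟩⟩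
  · refine ⟨Equiv.ofInjective e.1 e.1.injective, fun a b =>
      ⟨fun h => ⟨a, b, h, rfl, rfl⟩, ?_⟩⟩
    rintro ⟨x, y, hxy, hx, hy⟩
    obtain rfl : x = a := e.1.injective hx
    obtain rfl : y = b := e.1.injective hy
    exact hxy

lemma card_emb [Finite V] [Finite W] (A : V → V → Prop) (B : W → W → Prop) :
    Nat.card (Emb A B) = copyCount A B * Nat.card (AutS A) := by
  classical
  have key : ∀ p : Copies A B, Nonempty ({e : Emb A B // toCopy A B e = p} ≃ AutS A) := by
    intro p
    obtain ⟨hsub, hex⟩ := p.2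
    obtain ⟨e₀, spec⟩ := hex
    have hψc : ∀ σ : AutS A, ∀ x y : V, ((e₀ (σ.1 x) : W) = (e₀ (σ.1 y) : W)) → x = y :=
      fun σ x y h => σ.1.injective (e₀.injective (Subtype.ext h))
    have hψp : ∀ σ : AutS A, ∀ a b, A a b → B (e₀ (σ.1 a) : W) (e₀ (σ.1 b) : W) :=
      fun σ a b hab => (hsub _ _ ((spec _ _).mp ((σ.2 a b).mp hab))).1
    have hcopy : ∀ σ : AutS A,
        toCopy A B ⟨⟨fun x => (e₀ (σ.1 x) : W), fun x y h => hψc σ x y h⟩,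
          fun a b h => hψp σ a b h⟩ = p := by
      intro σ
      apply Subtype.ext
      apply Prod.ext
      · ext a
        constructor
        · rintro ⟨x, rfl⟩
          exact (e₀ (σ.1 x)).2
        · intro ha
          exact ⟨σ.1.symm (e₀.symm ⟨a, ha⟩), by show ((e₀ (σ.1 (σ.1.symm (e₀.symm ⟨a, ha⟩)))) : W) = a; simp⟩
      · funext a b
        apply propext
        constructor
        · rintro ⟨x, y, hxy, rfl, rfl⟩
          exact (spec _ _).mp ((σ.2 x y).mp hxy)
        · intro h
          have ha := (hsub a b h).2.1
          have hb := (hsub a b h).2.2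
          refine ⟨σ.1.symm (e₀.symm ⟨a, ha⟩), σ.1.symm (e₀.symm ⟨b, hb⟩), ?_,
            by show ((e₀ (σ.1 (σ.1.symm (e₀.symm ⟨a, ha⟩)))) : W) = a; simp,
            by show ((e₀ (σ.1 (σ.1.symm (e₀.symm ⟨b, hb⟩)))) : W) = b; simp⟩
          rw [σ.2, spec]
          simpa using h
    refine ⟨(Equiv.ofBijective
      (fun σ : AutS A => (⟨⟨⟨fun x => (e₀ (σ.1 x) : W), fun x y h => hψc σ x y h⟩,
        fun a b h => hψp σ a b h⟩, hcopy σ⟩ :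
        {e : Emb A B // toCopy A B e = p})) ⟨?_, ?_⟩).symm⟩
    · intro σ τ h
      have h' : ∀ x, (e₀ (σ.1 x) : W) = (e₀ (τ.1 x) : W) := fun x =>
        congrFun (congrArg (fun e => (e : Emb A B).1.toFun)
          (congrArg Subtype.val h)) x
      refine Subtype.ext (Equiv.ext fun x => ?_)
      exact e₀.injective (Subtype.ext (h' x))
    · rintro ⟨e, he⟩
      have hrange : Set.range e.1 = p.1.1 := congrArg (fun q => q.1.1) he
      have hrel : (fun a b => ∃ x y, A x y ∧ e.1 x = a ∧ e.1 y = b) = p.1.2 :=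
        congrArg (fun q => q.1.2) he
      have hmem : ∀ x, e.1 x ∈ p.1.1 := fun x => hrange ▸ Set.mem_range_self x
      have keyrel : ∀ a b, A a b ↔ p.1.2 (e.1 a) (e.1 b) := by
        intro a b
        rw [← hrel]
        constructor
        · intro h; exact ⟨a, b, h, rfl, rfl⟩
        · rintro ⟨x, y, hxy, hx, hy⟩
          obtain rfl : x = a := e.1.injective hx
          obtain rfl : y = b := e.1.injective hy
          exact hxy
      have hinj : Function.Injective (fun x => e₀.symm ⟨e.1 x, hmem x⟩) := by
        intro x y h
        exact e.1.injective (congrArg Subtype.val (e₀.symm.injective h))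
      refine ⟨⟨Equiv.ofBijective _ ((Finite.injective_iff_bijective).mp hinj), ?_⟩, ?_⟩
      · intro a b
        have h1 : ∀ x : V, (e₀ (e₀.symm ⟨e.1 x, hmem x⟩) : W) = e.1 x := by
          intro x; simp
        rw [keyrel a b]
        show p.1.2 (e.1 a) (e.1 b) ↔
          A (e₀.symm ⟨e.1 a, hmem a⟩) (e₀.symm ⟨e.1 b, hmem b⟩)
        rw [spec (e₀.symm ⟨e.1 a, hmem a⟩) (e₀.symm ⟨e.1 b, hmem b⟩), h1 a, h1 b]
      · apply Subtype.ext
        apply Subtype.ext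
        apply Function.Embedding.ext
        intro x
        show (e₀ (e₀.symm ⟨e.1 x, hmem x⟩) : W) = e.1 x
        simp
  rw [copyCount_eq_card, ← Nat.card_prod]
  refine Nat.card_congr ?_
  exact (Equiv.sigmaFiberEquiv (toCopy A B)).symm.trans
    ((Equiv.sigmaCongrRight fun p => (key p).some).trans (Equiv.sigmaEquivProd _ _))

lemma card_autS_conv (A : V → V → Prop) :
    Nat.card (AutS fun a b => A b a) = Nat.card (AutS A) :=
  Nat.card_congr (Equiv.subtypeEquivRight fun σ =>
    ⟨fun h a b => h b a, fun h a b => h b a⟩)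

lemma card_autS_iso {A₁ : V₁ → V₁ → Prop} {A₂ : V₂ → V₂ → Prop} (σ : V₁ ≃ V₂)
    (h : ∀ a b, A₁ a b ↔ A₂ (σ a) (σ b)) :
    Nat.card (AutS A₁) = Nat.card (AutS A₂) := by
  have h' : ∀ a b, A₂ a b ↔ A₁ (σ.symm a) (σ.symm b) := by
    intro a b; rw [h, Equiv.apply_symm_apply, Equiv.apply_symm_apply]
  have p1 : ∀ τ : AutS A₁, ∀ a b, A₂ a b ↔ A₂ ((σ.symm.trans (τ.1.trans σ)) a)
      ((σ.symm.trans (τ.1.trans σ)) b) := by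
    intro τ a b
    simp only [Equiv.trans_apply]
    rw [← h, ← τ.2, h, Equiv.apply_symm_apply, Equiv.apply_symm_apply]
  have p2 : ∀ τ : AutS A₂, ∀ a b, A₁ a b ↔ A₁ ((σ.trans (τ.1.trans σ.symm)) a)
      ((σ.trans (τ.1.trans σ.symm)) b) := by
    intro τ a b
    simp only [Equiv.trans_apply]
    rw [← h', ← τ.2, h', Equiv.symm_apply_apply, Equiv.symm_apply_apply]
  refine Nat.card_congr ⟨fun τ => ⟨σ.symm.trans (τ.1.trans σ), p1 τ⟩,
    fun τ => ⟨σ.trans (τ.1.trans σ.symm), p2 τ⟩, fun τ => ?_, fun τ => ?_⟩ <;>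
    · refine Subtype.ext (Equiv.ext fun x => ?_)
      simp

lemma copyCount_iso {A₁ : V₁ → V₁ → Prop} {A₂ : V₂ → V₂ → Prop} (σ : V₁ ≃ V₂)
    (h : ∀ a b, A₁ a b ↔ A₂ (σ a) (σ b)) (B : W → W → Prop) :
    copyCount A₁ B = copyCount A₂ B := by
  have h' : ∀ a b, A₂ a b ↔ A₁ (σ.symm a) (σ.symm b) := by
    intro a b; rw [h, Equiv.apply_symm_apply, Equiv.apply_symm_apply]
  refine Nat.card_congr (Equiv.subtypeEquivRight fun p => and_congr_right fun _ => ?_)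
  constructor
  · rintro ⟨e, he⟩
    refine ⟨σ.symm.trans e, fun a b => ?_⟩
    simp only [Equiv.trans_apply]
    rw [h' a b, he]
  · rintro ⟨e, he⟩
    refine ⟨σ.trans e, fun a b => ?_⟩
    simp only [Equiv.trans_apply]
    rw [h a b, he]

/-- Pairs of embeddings with disjoint images. -/
abbrev DisjPairs (A₁ A₂ : V → V → Prop) (B : W → W → Prop) : Type _ :=
  {fg : Emb A₁ B × Emb A₂ B // ∀ x y, fg.1.1 x ≠ fg.2.1 y}

def disjPairsSwap (A₁ A₂ : V → V → Prop) (B : W → W → Prop) :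
    DisjPairs A₁ A₂ B ≃ DisjPairs A₂ A₁ B where
  toFun p := ⟨(p.1.2, p.1.1), fun x y h => p.2 y x h.symm⟩
  invFun p := ⟨(p.1.2, p.1.1), fun x y h => p.2 y x h.symm⟩
  left_inv p := rfl
  right_inv p := rfl

def disjPairsSigma (A₁ A₂ : V → V → Prop) (B : W → W → Prop) :
    DisjPairs A₁ A₂ B ≃
      Σ f : Emb A₁ B, Emb A₂ (fun a b : {w : W // ∀ x, f.1 x ≠ w} => B a b) where
  toFun p := ⟨p.1.1, ⟨⟨fun x => ⟨p.1.2.1 x, fun y => (p.2 y x).symm ∘ Eq.symm⟩,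
      fun x y h => p.1.2.1.injective (congrArg Subtype.val h)⟩,
    fun a b hab => p.1.2.2 a b hab⟩⟩
  invFun q := ⟨(q.1, ⟨⟨fun x => (q.2.1 x : W),
      fun x y h => q.2.1.injective (Subtype.ext h)⟩,
    fun a b hab => q.2.2 a b hab⟩), fun x y h => (q.2.1 y).2 x h⟩
  left_inv p := rfl
  right_inv q := rfl

def bridgeEquiv (A : V → V → Prop) (u : V) (B : W → W → Prop) :
    Emb (bridgeMirror A u) B ≃
      {fg : DisjPairs A A B // B (fg.1.1.1 u) (fg.1.2.1 u)} where
  toFun e := ⟨⟨(⟨⟨fun x => e.1 (Sum.inl x), fun x y h => Sum.inl.inj (e.1.injective h)⟩,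
        fun a b hab => e.2 _ _ (Or.inl hab)⟩,
      ⟨⟨fun x => e.1 (Sum.inr x), fun x y h => Sum.inr.inj (e.1.injective h)⟩,
        fun a b hab => e.2 _ _ (Or.inl hab)⟩),
      fun x y h => Sum.inl_ne_inr (e.1.injective h)⟩,
    e.2 _ _ (Or.inr ⟨rfl, rfl⟩)⟩
  invFun p := ⟨⟨Sum.elim p.1.1.1.1 p.1.1.2.1, by
      rintro (x | x) (y | y) h
      · exact congrArg Sum.inl (p.1.1.1.1.injective h)
      · exact absurd h (p.1.2 x y)
      · exact absurd h.symm (p.1.2 y x)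
      · exact congrArg Sum.inr (p.1.1.2.1.injective h)⟩, by
    rintro s t (hd | ⟨rfl, rfl⟩)
    · rcases s with a | a <;> rcases t with b | b
      · exact p.1.1.1.2 a b hd
      · exact absurd hd not_false
      · exact absurd hd not_false
      · exact p.1.1.2.2 a b hd
    · exact p.2⟩
  left_inv e := Subtype.ext (Function.Embedding.ext fun s => by cases s <;> rfl)
  right_inv p := rfl

end ConvAux
/-- Bridge-mirroring a converse invariant orgraph at any vertex yields a
converse invariant orgraph. -/
theorem stmt_14 {V : Type} [Fintype V]
    (A : V → V → Prop) (hA : IsOrgraph A) (hCI : ConverseInvariant A) (u : V) :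
    ConverseInvariant (bridgeMirror A u) := by
  intro W fW B hB
  haveI : Finite W := Finite.of_fintype W
  classical
  set A' : V → V → Prop := fun a b => A b a with hA'def
  -- embedding-count version of converse invariance of A
  have embEq : ∀ (W' : Type) (_ : Finite W') (B' : W' → W' → Prop), IsTournament B' →
      Nat.card (Emb A B') = Nat.card (Emb A' B') := by
    intro W' fW' B' hB'
    haveI := Fintype.ofFinite W'
    rw [card_emb, card_emb, hCI W' inferInstance B' hB', hA'def, card_autS_conv]
  -- restriction of a tournament is a tournament
  have hres : ∀ S : W → Prop, IsTournament (fun a b : {w // S w} => B (a : W) (b : W)) :=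
    fun S => ⟨fun v => hB.1 v, fun a b hab => hB.2 a b (fun h => hab (Subtype.ext h))⟩
  -- replacing the second component of a disjoint pair
  have hAA' : ∀ A₁ : V → V → Prop,
      Nat.card (DisjPairs A₁ A B) = Nat.card (DisjPairs A₁ A' B) := by
    intro A₁
    rw [Nat.card_congr (disjPairsSigma A₁ A B), Nat.card_congr (disjPairsSigma A₁ A' B)]
    exact card_sigma_congr fun f => embEq _ inferInstance _ (hres _)
  have hPP : Nat.card (DisjPairs A A B) = Nat.card (DisjPairs A' A' B) := by
    rw [hAA' A, Nat.card_congr (disjPairsSwap A A' B), hAA' A']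
  -- counting bridge embeddings via disjoint pairs
  have hcount : ∀ A₁ : V → V → Prop,
      Nat.card (DisjPairs A₁ A₁ B) = 2 * Nat.card (Emb (bridgeMirror A₁ u) B) := by
    intro A₁
    have hne : ∀ fg : DisjPairs A₁ A₁ B, fg.1.1.1 u ≠ fg.1.2.1 u := fun fg => fg.2 u u
    have key : ∀ fg : DisjPairs A₁ A₁ B,
        ¬ B (fg.1.1.1 u) (fg.1.2.1 u) ↔ B (fg.1.2.1 u) (fg.1.1.1 u) := by
      intro fg
      have h2 := hB.2 _ _ (hne fg).symm
      constructor
      · intro h; exact h2.mpr h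
      · intro h hc; exact (hB.2 _ _ (hne fg)).mp hc h
    have hflip : Nat.card {fg : DisjPairs A₁ A₁ B // ¬ B (fg.1.1.1 u) (fg.1.2.1 u)} =
        Nat.card {fg : DisjPairs A₁ A₁ B // B (fg.1.1.1 u) (fg.1.2.1 u)} := by
      refine Nat.card_congr
        ⟨fun p => ⟨⟨(p.1.1.2, p.1.1.1), fun x y h => p.1.2 y x h.symm⟩, (key p.1).mp p.2⟩,
         fun p => ⟨⟨(p.1.1.2, p.1.1.1), fun x y h => p.1.2 y x h.symm⟩,
           fun hc => (hB.2 _ _ (hne p.1)).mp p.2 hc⟩,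
         fun p => rfl, fun p => rfl⟩
    rw [card_compl_split (fun fg : DisjPairs A₁ A₁ B => B (fg.1.1.1 u) (fg.1.2.1 u)), hflip,
      Nat.card_congr (bridgeEquiv A₁ u B).symm]
    ring
  have hDD : Nat.card (Emb (bridgeMirror A u) B) = Nat.card (Emb (bridgeMirror A' u) B) := by
    have h1 := hcount A
    have h2 := hcount A'
    rw [hPP] at h1
    omega
  -- the converse of the bridge-mirror is isomorphic to the bridge-mirror of the converse
  have hiso : ∀ a b : V ⊕ V, (fun x y => bridgeMirror A u y x) a b ↔
      bridgeMirror A' u (Equiv.sumComm V V a) (Equiv.sumComm V V b) := by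
    rintro (a | a) (b | b) <;>
      simp [bridgeMirror, disjUnion2, hA'def, Equiv.sumComm, and_comm]
  have h1 : copyCount (fun a b => bridgeMirror A u b a) B = copyCount (bridgeMirror A' u) B :=
    copyCount_iso (Equiv.sumComm V V) hiso B
  have haut : Nat.card (AutS (bridgeMirror A' u)) = Nat.card (AutS (bridgeMirror A u)) := by
    rw [← card_autS_conv (bridgeMirror A u)]
    exact (card_autS_iso (Equiv.sumComm V V) hiso).symm
  haveI : Nonempty (AutS (bridgeMirror A u)) := ⟨⟨Equiv.refl _, fun _ _ => Iff.rfl⟩⟩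
  have hpos : 0 < Nat.card (AutS (bridgeMirror A u)) := Nat.card_pos
  rw [h1]
  refine Nat.eq_of_mul_eq_mul_right hpos ?_
  calc copyCount (bridgeMirror A u) B * Nat.card (AutS (bridgeMirror A u))
      = Nat.card (Emb (bridgeMirror A u) B) := (card_emb _ _).symm
    _ = Nat.card (Emb (bridgeMirror A' u) B) := hDD
    _ = copyCount (bridgeMirror A' u) B * Nat.card (AutS (bridgeMirror A' u)) := card_emb _ _
    _ = copyCount (bridgeMirror A' u) B * Nat.card (AutS (bridgeMirror A u)) := by rw [haut]
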